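/- Let A be a finite von Neumann factor with normalized trace tr, and let 1 < p, q < ∞ with 1/p + 1/q = 1. If c, d ∈ A are positive with c^q + d^q ≤ 1, then tr(ca + db) ≤ (tr(a^p + b^p))^{1/p} for all positive a, b ∈ A. -/

import Mathlib

open scoped ComplexOrder
open Filter

section Aux
variable {A : Type*} [CStarAlgebra A] [PartialOrder A] [StarOrderedRing A]

lemma tr_re_nonneg (tr : A →ₗ[ℂ] ℂ) (htr_pos : ∀ x : A, 0 ≤ x → 0 ≤ tr x)
    {x : A} (hx : 0 ≤ x) : 0 ≤ (tr x).re := by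
  simpa using (Complex.le_def.mp (htr_pos x hx)).1

lemma tr_re_mono (tr : A →ₗ[ℂ] ℂ) (htr_pos : ∀ x : A, 0 ≤ x → 0 ≤ tr x)
    {x y : A} (hxy : x ≤ y) : (tr x).re ≤ (tr y).re := by
  have h := tr_re_nonneg tr htr_pos (sub_nonneg.mpr hxy)
  rw [map_sub] at h
  simpa [Complex.sub_re] using h

lemma tr_smul_re (tr : A →ₗ[ℂ] ℂ) (s : ℝ) (z : A) :
    (tr (s • z)).re = s * (tr z).re := by
  rw [LinearMap.map_smul_of_tower]
  simp [Complex.real_smul]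

lemma rp_nonneg (x : A) (hx : 0 ≤ x) (r : ℝ) : 0 ≤ cfc (fun t : ℝ => t ^ r) x :=
  cfc_nonneg fun t ht => Real.rpow_nonneg (spectrum_nonneg_of_nonneg hx ht) r

lemma rp_sa (x : A) (hx : 0 ≤ x) (r : ℝ) : IsSelfAdjoint (cfc (fun t : ℝ => t ^ r) x) :=
  IsSelfAdjoint.of_nonneg (rp_nonneg x hx r)

lemma rp_mul (x : A) (hx : 0 ≤ x) (r s : ℝ) (hr : 0 ≤ r) (hs : 0 ≤ s) :
    cfc (fun t : ℝ => t ^ r) x * cfc (fun t : ℝ => t ^ s) x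
      = cfc (fun t : ℝ => t ^ (r + s)) x := by
  rw [← cfc_mul _ _ x (Real.continuous_rpow_const hr).continuousOn
      (Real.continuous_rpow_const hs).continuousOn]
  exact cfc_congr fun t ht =>
    (Real.rpow_add_of_nonneg (spectrum_nonneg_of_nonneg hx ht) hr hs).symm

lemma rp_one (x : A) (hx : 0 ≤ x) : cfc (fun t : ℝ => t ^ (1 : ℝ)) x = x := by
  have h : cfc (fun t : ℝ => t ^ (1 : ℝ)) x = cfc (id : ℝ → ℝ) x :=
    cfc_congr fun t _ => Real.rpow_one t
  rw [h, cfc_id ℝ x (IsSelfAdjoint.of_nonneg hx)]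

lemma rp_zero (x : A) (hx : 0 ≤ x) : cfc (fun t : ℝ => t ^ (0 : ℝ)) x = 1 := by
  have h : cfc (fun t : ℝ => t ^ (0 : ℝ)) x = cfc (fun _ : ℝ => (1 : ℝ)) x :=
    cfc_congr fun t _ => Real.rpow_zero t
  rw [h, cfc_const (1:ℝ) x (IsSelfAdjoint.of_nonneg hx), map_one]

lemma rp_le [Nontrivial A] (x : A) (hx : 0 ≤ x) (r m : ℝ) (hr : 0 ≤ r) (hrm : r ≤ m) :
    cfc (fun t : ℝ => t ^ r) x ≤ algebraMap ℝ A ((1 + ‖x‖) ^ m) := by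
  apply cfc_le_algebraMap _ _ _ (fun t ht => ?_)
    ((Real.continuous_rpow_const hr).continuousOn) (IsSelfAdjoint.of_nonneg hx)
  have ht0 : 0 ≤ t := spectrum_nonneg_of_nonneg hx ht
  have ht1 : t ≤ 1 + ‖x‖ := by
    have := spectrum.norm_le_norm_of_mem (𝕜 := ℝ) ht
    rw [Real.norm_eq_abs] at this
    nlinarith [abs_nonneg t, le_abs_self t, norm_nonneg x]
  calc t ^ r ≤ (1 + ‖x‖) ^ r := Real.rpow_le_rpow ht0 ht1 hr
    _ ≤ (1 + ‖x‖) ^ m := Real.rpow_le_rpow_of_exponent_le (by nlinarith [norm_nonneg x]) hrm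

lemma tr_cs (tr : A →ₗ[ℂ] ℂ) (htr_pos : ∀ x : A, 0 ≤ x → 0 ≤ tr x)
    (u v : A) (hsym : tr (star v * u) = tr (star u * v)) :
    (tr (star u * v)).re ^ 2 ≤ (tr (star u * u)).re * (tr (star v * v)).re := by
  set a := (tr (star u * u)).re with ha
  set c := (tr (star v * v)).re with hc
  set r := (tr (star u * v)).re with hr
  have key : ∀ t : ℝ, 0 ≤ a * (t * t) + (2 * r) * t + c := by
    intro t
    have h0 : 0 ≤ (tr (star (t • u + v) * (t • u + v))).re :=
      tr_re_nonneg tr htr_pos (star_mul_self_nonneg _)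
    have hexp : star (t • u + v) * (t • u + v)
        = (t * t) • (star u * u) + t • (star u * v)
          + t • (star v * u) + star v * v := by
      simp only [star_add, star_smul, star_trivial, add_mul, mul_add,
        smul_mul_assoc, mul_smul_comm, smul_smul, smul_add]
      module
    rw [hexp] at h0
    simp only [map_add, tr_smul_re, Complex.add_re, hsym] at h0
    nlinarith [h0]
  have hd := discrim_le_zero key
  rw [discrim] at hd
  nlinarith [hd]

lemma rpow_lim (x : ℝ) (hx : 0 ≤ x) {e : ℕ → ℝ} {L : ℝ}
    (he : Tendsto e atTop (nhds L)) (h : 0 < x ∨ 0 < L) :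
    Tendsto (fun n => x ^ e n) atTop (nhds (x ^ L)) := by
  rcases hx.lt_or_eq with hx' | hx'
  · have hrw : ∀ s : ℝ, x ^ s = Real.exp (Real.log x * s) := fun s =>
      Real.rpow_def_of_pos hx' s
    simp only [hrw]
    exact (Real.continuous_exp.tendsto _).comp (he.const_mul (Real.log x))
  · have hL : 0 < L := by
      rcases h with h | h
      · exact absurd hx'.symm h.ne'
      · exact h
    rw [← hx']
    have hev : ∀ᶠ n in atTop, (0:ℝ) ^ e n = (0:ℝ) ^ L := by
      filter_upwards [he.eventually (eventually_gt_nhds hL)] with n hn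
      rw [Real.zero_rpow hn.ne', Real.zero_rpow hL.ne']
    exact Tendsto.congr' (hev.mono fun n h => h.symm) tendsto_const_nhds

end Aux


lemma abstract_interp (F : ℝ → ℝ) (M : ℝ) (hM1 : 1 ≤ M)
    (hM : ∀ θ, 0 ≤ θ → θ ≤ 1 → F θ ≤ M)
    (hFnn : ∀ θ, 0 ≤ θ → θ ≤ 1 → 0 ≤ F θ)
    (hmid : ∀ θ₁ θ₂, 0 ≤ θ₁ → θ₁ ≤ 1 → 0 ≤ θ₂ → θ₂ ≤ 1 →
      F ((θ₁+θ₂)/2)^2 ≤ F θ₁ * F θ₂)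
    (θ : ℝ) (hθ0 : 0 < θ) (hθ1 : θ < 1) :
    F θ ≤ F 0 ^ (1-θ) * F 1 ^ θ := by
  have hF0 : 0 ≤ F 0 := hFnn 0 le_rfl zero_le_one
  have hF1 : 0 ≤ F 1 := hFnn 1 zero_le_one le_rfl
  have hM0 : (0:ℝ) < M := lt_of_lt_of_le one_pos hM1
  have key : ∀ n : ℕ, ∀ t : ℝ, 0 ≤ t → t ≤ 1 →
      ∃ c d : ℕ, c + d + 1 = 2^n ∧ |(d:ℝ) - 2^n * t| ≤ 1 ∧
        F t ^ (2^n) ≤ F 0 ^ c * F 1 ^ d * M := by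
    intro n
    induction n with
    | zero =>
      intro t ht0 ht1
      refine ⟨0, 0, by norm_num, ?_, by simpa using hM t ht0 ht1⟩
      simp only [Nat.cast_zero, pow_zero, one_mul, zero_sub, abs_neg]
      rw [abs_of_nonneg ht0]; exact ht1
    | succ n ih =>
      intro t ht0 ht1
      by_cases hhalf : t ≤ 1/2
      · obtain ⟨c, d, hsum, habs, hle⟩ := ih (2*t) (by linarith) (by linarith)
        refine ⟨2^n + c, d, ?_, ?_, ?_⟩
        · rw [pow_succ]; omega
        · rw [show ((2:ℝ))^(n+1) * t = 2^n * (2*t) by ring]; exact habs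
        · have hdb : F t ^ 2 ≤ F 0 * F (2*t) := by
            have h := hmid 0 (2*t) le_rfl zero_le_one (by linarith) (by linarith)
            rwa [show ((0:ℝ) + 2*t)/2 = t by ring] at h
          calc F t ^ 2^(n+1) = (F t ^ 2) ^ 2^n := by
                rw [show (2:ℕ)^(n+1) = 2 * 2^n by rw [pow_succ]; ring, pow_mul]
            _ ≤ (F 0 * F (2*t)) ^ 2^n := pow_le_pow_left₀ (sq_nonneg _) hdb _
            _ = F 0 ^ 2^n * F (2*t) ^ 2^n := mul_pow _ _ _
            _ ≤ F 0 ^ 2^n * (F 0 ^ c * F 1 ^ d * M) :=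
                mul_le_mul_of_nonneg_left hle (pow_nonneg hF0 _)
            _ = F 0 ^ (2^n + c) * F 1 ^ d * M := by rw [pow_add]; ring
      · obtain ⟨c, d, hsum, habs, hle⟩ := ih (2*t - 1) (by linarith) (by linarith)
        refine ⟨c, 2^n + d, ?_, ?_, ?_⟩
        · rw [pow_succ]; omega
        · have heq : |((2^n + d : ℕ):ℝ) - 2^(n+1) * t| = |(d:ℝ) - 2^n * (2*t-1)| := by
            congr 1
            push_cast
            ring
          rw [heq]; exact habs
        · have hdb : F t ^ 2 ≤ F (2*t-1) * F 1 := by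
            have h := hmid (2*t-1) 1 (by linarith) (by linarith) zero_le_one le_rfl
            rwa [show ((2*t-1) + 1)/2 = t by ring] at h
          calc F t ^ 2^(n+1) = (F t ^ 2) ^ 2^n := by
                rw [show (2:ℕ)^(n+1) = 2 * 2^n by rw [pow_succ]; ring, pow_mul]
            _ ≤ (F (2*t-1) * F 1) ^ 2^n := pow_le_pow_left₀ (sq_nonneg _) hdb _
            _ = F (2*t-1) ^ 2^n * F 1 ^ 2^n := mul_pow _ _ _
            _ ≤ (F 0 ^ c * F 1 ^ d * M) * F 1 ^ 2^n :=
                mul_le_mul_of_nonneg_right hle (pow_nonneg hF1 _)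
            _ = F 0 ^ c * F 1 ^ (2^n + d) * M := by rw [pow_add]; ring
  choose cs ds hsum habs hle using fun n => key n θ hθ0.le hθ1.le
  have h2pos : ∀ n : ℕ, (0:ℝ) < 2^n := fun n => pow_pos two_pos n
  have hinv : Tendsto (fun n : ℕ => ((2:ℝ)^n)⁻¹) atTop (nhds 0) :=
    tendsto_inv_atTop_zero.comp (tendsto_pow_atTop_atTop_of_one_lt one_lt_two)
  have hdlim : Tendsto (fun n => (ds n : ℝ) / 2^n) atTop (nhds θ) := by
    have hz : Tendsto (fun n : ℕ => ((ds n : ℝ)/2^n - θ)) atTop (nhds 0) := by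
      apply squeeze_zero_norm (a := fun n : ℕ => ((2:ℝ)^n)⁻¹) ?_ hinv
      intro n
      rw [Real.norm_eq_abs, show (ds n:ℝ)/2^n - θ = ((ds n:ℝ) - 2^n*θ)/2^n by
        field_simp, abs_div, abs_of_pos (h2pos n)]
      simp only [inv_eq_one_div]
      exact (div_le_div_iff_of_pos_right (h2pos n)).mpr (habs n)
    have := hz.add (tendsto_const_nhds (x := θ) (f := atTop))
    simpa using this
  have hclim : Tendsto (fun n => (cs n : ℝ) / 2^n) atTop (nhds (1-θ)) := by
    have hrw : ∀ n : ℕ, (cs n : ℝ)/2^n = 1 - ((2:ℝ)^n)⁻¹ - (ds n : ℝ)/2^n := by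
      intro n
      have h2 : (cs n : ℝ) + ds n + 1 = 2^n := by exact_mod_cast hsum n
      field_simp
      linarith
    simp only [hrw]
    have h := ((tendsto_const_nhds (x := (1:ℝ)) (f := atTop)).sub hinv).sub hdlim
    simpa using h
  have hGle : ∀ n : ℕ, F θ ≤ F 0 ^ ((cs n:ℝ)/2^n) * F 1 ^ ((ds n:ℝ)/2^n)
      * M ^ (((2:ℝ)^n)⁻¹) := by
    intro n
    have hFθ : 0 ≤ F θ := hFnn θ hθ0.le hθ1.le
    have h := Real.rpow_le_rpow (pow_nonneg hFθ _) (hle n) (inv_nonneg.mpr (h2pos n).le)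
    have hcast : (((2:ℕ)^n : ℕ) : ℝ) = (2:ℝ)^n := by push_cast; ring
    rw [← Real.rpow_natCast (F θ) (2^n), hcast, ← Real.rpow_mul hFθ,
      mul_inv_cancel₀ (h2pos n).ne', Real.rpow_one] at h
    rw [Real.mul_rpow (mul_nonneg (pow_nonneg hF0 _) (pow_nonneg hF1 _)) hM0.le,
      Real.mul_rpow (pow_nonneg hF0 _) (pow_nonneg hF1 _),
      ← Real.rpow_natCast (F 0) (cs n), ← Real.rpow_natCast (F 1) (ds n),
      ← Real.rpow_mul hF0, ← Real.rpow_mul hF1] at h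
    simpa [div_eq_mul_inv] using h
  have hlim : Tendsto (fun n : ℕ => F 0 ^ ((cs n:ℝ)/2^n) * F 1 ^ ((ds n:ℝ)/2^n)
      * M ^ (((2:ℝ)^n)⁻¹)) atTop (nhds (F 0 ^ (1-θ) * F 1 ^ θ * M ^ (0:ℝ))) :=
    ((rpow_lim (F 0) hF0 hclim (Or.inr (by linarith))).mul
      (rpow_lim (F 1) hF1 hdlim (Or.inr hθ0))).mul
      (rpow_lim M hM0.le hinv (Or.inl hM0))
  rw [Real.rpow_zero, mul_one] at hlim
  exact ge_of_tendsto' hlim hGle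

section Pair
variable {A : Type*} [CStarAlgebra A] [PartialOrder A] [StarOrderedRing A]

lemma holder_pair (tr : A →ₗ[ℂ] ℂ) (htr_pos : ∀ x : A, 0 ≤ x → 0 ≤ tr x)
    (htr_unital : tr 1 = 1) (htr_tracial : ∀ x y : A, tr (x * y) = tr (y * x))
    (p q : ℝ) (hp : 1 < p) (hq : 1 < q) (hpq : 1 / p + 1 / q = 1)
    (x y : A) (hx : 0 ≤ x) (hy : 0 ≤ y) :
    (tr (x * y)).re ≤ (tr (cfc (fun t : ℝ => t ^ q) x)).re ^ (1/q)
      * (tr (cfc (fun t : ℝ => t ^ p) y)).re ^ (1/p) := by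
  have hp0 : (0:ℝ) < p := lt_trans one_pos hp
  have hq0 : (0:ℝ) < q := lt_trans one_pos hq
  have hntA : Nontrivial A := by
    refine nontrivial_of_ne 1 0 fun h => ?_
    rw [h, map_zero] at htr_unital
    exact one_ne_zero htr_unital.symm
  set X : ℝ → A := fun r => cfc (fun t : ℝ => t ^ r) x with hXdef
  set Y : ℝ → A := fun s => cfc (fun t : ℝ => t ^ s) y with hYdef
  have hXmul : ∀ r s : ℝ, 0 ≤ r → 0 ≤ s → X r * X s = X (r+s) :=
    fun r s hr hs => rp_mul x hx r s hr hs
  have hYmul : ∀ r s : ℝ, 0 ≤ r → 0 ≤ s → Y r * Y s = Y (r+s) :=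
    fun r s hr hs => rp_mul y hy r s hr hs
  have hinner : ∀ r₁ s₁ r₂ s₂ : ℝ, 0 ≤ r₁ → 0 ≤ s₁ → 0 ≤ r₂ → 0 ≤ s₂ →
      tr (star (X r₁ * Y s₁) * (X r₂ * Y s₂)) = tr (X (r₁+r₂) * Y (s₁+s₂)) := by
    intro r₁ s₁ r₂ s₂ hr₁ hs₁ hr₂ hs₂
    rw [star_mul, (rp_sa y hy s₁).star_eq, (rp_sa x hx r₁).star_eq]
    calc tr (Y s₁ * X r₁ * (X r₂ * Y s₂))
        = tr (Y s₁ * (X r₁ * (X r₂ * Y s₂))) := by rw [mul_assoc]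
      _ = tr ((X r₁ * (X r₂ * Y s₂)) * Y s₁) := htr_tracial _ _
      _ = tr (X (r₁+r₂) * (Y s₂ * Y s₁)) := by
            rw [← mul_assoc, ← mul_assoc, hXmul r₁ r₂ hr₁ hr₂, mul_assoc]
      _ = tr (X (r₁+r₂) * Y (s₁+s₂)) := by rw [hYmul s₂ s₁ hs₂ hs₁, add_comm s₂ s₁]
  set P : ℝ → ℝ → ℝ := fun r s => (tr (X r * Y s)).re with hPdef
  have hPinner : ∀ r s : ℝ, 0 ≤ r → 0 ≤ s →
      P r s = (tr (star (X (r/2) * Y (s/2)) * (X (r/2) * Y (s/2)))).re := by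
    intro r s hr hs
    rw [hinner (r/2) (s/2) (r/2) (s/2) (by linarith) (by linarith) (by linarith) (by linarith)]
    norm_num
    rfl
  have hPnn : ∀ r s : ℝ, 0 ≤ r → 0 ≤ s → 0 ≤ P r s := by
    intro r s hr hs
    rw [hPinner r s hr hs]
    exact tr_re_nonneg tr htr_pos (star_mul_self_nonneg _)
  have hmid : ∀ r₁ s₁ r₂ s₂ : ℝ, 0 ≤ r₁ → 0 ≤ s₁ → 0 ≤ r₂ → 0 ≤ s₂ →
      P ((r₁+r₂)/2) ((s₁+s₂)/2) ^ 2 ≤ P r₁ s₁ * P r₂ s₂ := by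
    intro r₁ s₁ r₂ s₂ hr₁ hs₁ hr₂ hs₂
    have hsym : tr (star (X (r₂/2) * Y (s₂/2)) * (X (r₁/2) * Y (s₁/2)))
        = tr (star (X (r₁/2) * Y (s₁/2)) * (X (r₂/2) * Y (s₂/2))) := by
      rw [hinner (r₂/2) (s₂/2) (r₁/2) (s₁/2) (by linarith) (by linarith) (by linarith) (by linarith),
          hinner (r₁/2) (s₁/2) (r₂/2) (s₂/2) (by linarith) (by linarith) (by linarith) (by linarith),
          add_comm (r₂/2) (r₁/2), add_comm (s₂/2) (s₁/2)]
    have hcs := tr_cs tr htr_pos (X (r₁/2) * Y (s₁/2)) (X (r₂/2) * Y (s₂/2)) hsym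
    rw [hinner (r₁/2) (s₁/2) (r₂/2) (s₂/2) (by linarith) (by linarith) (by linarith) (by linarith),
        hinner (r₁/2) (s₁/2) (r₁/2) (s₁/2) (by linarith) (by linarith) (by linarith) (by linarith),
        hinner (r₂/2) (s₂/2) (r₂/2) (s₂/2) (by linarith) (by linarith) (by linarith) (by linarith)]
        at hcs
    have e1 : r₁/2 + r₂/2 = (r₁+r₂)/2 := by ring
    have e2 : s₁/2 + s₂/2 = (s₁+s₂)/2 := by ring
    have e3 : r₁/2 + r₁/2 = r₁ := by ring
    have e4 : s₁/2 + s₁/2 = s₁ := by ring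
    have e5 : r₂/2 + r₂/2 = r₂ := by ring
    have e6 : s₂/2 + s₂/2 = s₂ := by ring
    rw [e1, e2, e3, e4, e5, e6] at hcs
    exact hcs
  -- upper bound
  set Kx : ℝ := (1 + ‖x‖) ^ q with hKx
  set Ky : ℝ := (1 + ‖y‖) ^ p with hKy
  have hKx0 : 0 ≤ Kx := Real.rpow_nonneg (by positivity) q
  have hKy0 : 0 ≤ Ky := Real.rpow_nonneg (by positivity) p
  have htr1 : (tr 1).re = 1 := by rw [htr_unital]; norm_num
  have hPbound : ∀ r s : ℝ, 0 ≤ r → r ≤ q → 0 ≤ s → s ≤ p → P r s ≤ Kx * Ky := by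
    intro r s hr hrq hs hsp
    have hrot : P r s = (tr (Y (s/2) * X r * Y (s/2))).re := by
      have h1 : Y (s/2) * Y (s/2) = Y s := by
        rw [hYmul (s/2) (s/2) (by linarith) (by linarith)]
        norm_num
      show (tr (X r * Y s)).re = _
      calc (tr (X r * Y s)).re = (tr ((X r * Y (s/2)) * Y (s/2))).re := by
            rw [← h1, mul_assoc]
        _ = (tr (Y (s/2) * (X r * Y (s/2)))).re := by rw [htr_tracial]
        _ = (tr (Y (s/2) * X r * Y (s/2))).re := by rw [mul_assoc]
    rw [hrot]
    have hle1 : Y (s/2) * X r * Y (s/2) ≤ Kx • Y s := by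
      have h := (rp_sa y hy (s/2)).conjugate_le_conjugate (rp_le x hx r q hr hrq)
      calc Y (s/2) * X r * Y (s/2) ≤ Y (s/2) * algebraMap ℝ A Kx * Y (s/2) := h
        _ = Kx • (Y (s/2) * Y (s/2)) := by
            rw [Algebra.algebraMap_eq_smul_one]
            rw [mul_smul_comm, mul_one, smul_mul_assoc]
        _ = Kx • Y s := by
            rw [hYmul (s/2) (s/2) (by linarith) (by linarith)]
            norm_num
    calc (tr (Y (s/2) * X r * Y (s/2))).re ≤ (tr (Kx • Y s)).re :=
          tr_re_mono tr htr_pos hle1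
      _ = Kx * (tr (Y s)).re := tr_smul_re tr _ _
      _ ≤ Kx * Ky := by
          apply mul_le_mul_of_nonneg_left _ hKx0
          have h2 : (tr (Y s)).re ≤ (tr (algebraMap ℝ A Ky)).re :=
            tr_re_mono tr htr_pos (rp_le y hy s p hs hsp)
          rwa [Algebra.algebraMap_eq_smul_one, tr_smul_re tr Ky 1, htr1, mul_one] at h2
  -- the interpolation function
  set F : ℝ → ℝ := fun θ => P ((1-θ)*q) (θ*p) with hFdef
  have hexp1 : ∀ θ : ℝ, 0 ≤ θ → θ ≤ 1 → 0 ≤ (1-θ)*q := fun θ h0 h1 => by nlinarith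
  have hexp2 : ∀ θ : ℝ, 0 ≤ θ → θ ≤ 1 → 0 ≤ θ*p := fun θ h0 h1 => by nlinarith
  have hFM : ∀ θ : ℝ, 0 ≤ θ → θ ≤ 1 → F θ ≤ max (Kx * Ky) 1 := by
    intro θ h0 h1
    refine le_trans (hPbound _ _ (hexp1 θ h0 h1) ?_ (hexp2 θ h0 h1) ?_) (le_max_left _ _)
    · nlinarith
    · nlinarith
  have hFnn : ∀ θ : ℝ, 0 ≤ θ → θ ≤ 1 → 0 ≤ F θ := fun θ h0 h1 =>
    hPnn _ _ (hexp1 θ h0 h1) (hexp2 θ h0 h1)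
  have hFmid : ∀ θ₁ θ₂ : ℝ, 0 ≤ θ₁ → θ₁ ≤ 1 → 0 ≤ θ₂ → θ₂ ≤ 1 →
      F ((θ₁+θ₂)/2) ^ 2 ≤ F θ₁ * F θ₂ := by
    intro θ₁ θ₂ h₁0 h₁1 h₂0 h₂1
    have h := hmid ((1-θ₁)*q) (θ₁*p) ((1-θ₂)*q) (θ₂*p)
      (hexp1 θ₁ h₁0 h₁1) (hexp2 θ₁ h₁0 h₁1) (hexp1 θ₂ h₂0 h₂1) (hexp2 θ₂ h₂0 h₂1)
    have e1 : ((1-θ₁)*q + (1-θ₂)*q)/2 = (1-(θ₁+θ₂)/2)*q := by ring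
    have e2 : (θ₁*p + θ₂*p)/2 = ((θ₁+θ₂)/2)*p := by ring
    rw [e1, e2] at h
    exact h
  have hθ0 : (0:ℝ) < 1/p := by positivity
  have hθ1 : 1/p < 1 := by
    rw [div_lt_one hp0]; exact hp
  have hinterp := abstract_interp F (max (Kx * Ky) 1) (le_max_right _ _)
    hFM hFnn hFmid (1/p) hθ0 hθ1
  -- identify F (1/p), F 0, F 1
  have hq1 : (1 - 1/p) * q = 1 := by
    field_simp
    field_simp at hpq
    linarith
  have hFθ : F (1/p) = (tr (x * y)).re := by
    show P ((1 - 1/p)*q) ((1/p)*p) = _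
    rw [hq1, show (1/p)*p = 1 by field_simp]
    show (tr (X 1 * Y 1)).re = _
    rw [show X 1 = x from rp_one x hx, show Y 1 = y from rp_one y hy]
  have hF0 : F 0 = (tr (cfc (fun t : ℝ => t ^ q) x)).re := by
    show P ((1-0)*q) (0*p) = _
    rw [show (1-(0:ℝ))*q = q by ring, show (0:ℝ)*p = 0 by ring]
    show (tr (X q * Y 0)).re = _
    rw [show Y 0 = 1 from rp_zero y hy, mul_one]
  have hF1 : F 1 = (tr (cfc (fun t : ℝ => t ^ p) y)).re := by
    show P ((1-1)*q) (1*p) = _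
    rw [show ((1:ℝ)-1)*q = 0 by ring, show (1:ℝ)*p = p by ring]
    show (tr (X 0 * Y p)).re = _
    rw [show X 0 = 1 from rp_zero x hx, one_mul]
  rw [hFθ, hF0, hF1, show (1:ℝ) - 1/p = 1/q by field_simp at hpq ⊢; linarith] at hinterp
  exact hinterp
end Pair
lemma scalar_step (p q : ℝ) (hp : 1 < p) (hq : 1 < q) (hpq : 1 / p + 1 / q = 1)
    (C D A1 B1 : ℝ) (hC : 0 ≤ C) (hD : 0 ≤ D) (hA : 0 ≤ A1) (hB : 0 ≤ B1)
    (hCD : C + D ≤ 1) :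
    C ^ (1/q) * A1 ^ (1/p) + D ^ (1/q) * B1 ^ (1/p) ≤ (A1 + B1) ^ (1/p) := by
  have hp0 : (0:ℝ) < p := lt_trans one_pos hp
  have hq0 : (0:ℝ) < q := lt_trans one_pos hq
  rcases (add_nonneg hA hB).eq_or_lt with hS | hS
  · have hA0 : A1 = 0 := by linarith
    have hB0 : B1 = 0 := by linarith
    rw [hA0, hB0, Real.zero_rpow (by positivity : (1:ℝ)/p ≠ 0)]
    norm_num
    positivity
  · set S := A1 + B1 with hSdef
    have hSne : S ≠ 0 := hS.ne'
    have key1 : C ^ (1/q) * (A1/S) ^ (1/p) ≤ 1/q * C + 1/p * (A1/S) :=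
      Real.geom_mean_le_arith_mean2_weighted (by positivity) (by positivity)
        hC (by positivity) (by linarith)
    have key2 : D ^ (1/q) * (B1/S) ^ (1/p) ≤ 1/q * D + 1/p * (B1/S) :=
      Real.geom_mean_le_arith_mean2_weighted (by positivity) (by positivity)
        hD (by positivity) (by linarith)
    have hSp : 0 ≤ S ^ (1/p) := Real.rpow_nonneg hS.le _
    have e1 : C ^ (1/q) * A1 ^ (1/p) = S ^ (1/p) * (C ^ (1/q) * (A1/S) ^ (1/p)) := by
      have hmul : S * (A1/S) = A1 := by field_simp
      calc C ^ (1/q) * A1 ^ (1/p)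
          = C ^ (1/q) * (S * (A1/S)) ^ (1/p) := by rw [hmul]
        _ = C ^ (1/q) * (S ^ (1/p) * (A1/S) ^ (1/p)) := by
            rw [Real.mul_rpow hS.le (by positivity)]
        _ = S ^ (1/p) * (C ^ (1/q) * (A1/S) ^ (1/p)) := by ring
    have e2 : D ^ (1/q) * B1 ^ (1/p) = S ^ (1/p) * (D ^ (1/q) * (B1/S) ^ (1/p)) := by
      have hmul : S * (B1/S) = B1 := by field_simp
      calc D ^ (1/q) * B1 ^ (1/p)
          = D ^ (1/q) * (S * (B1/S)) ^ (1/p) := by rw [hmul]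
        _ = D ^ (1/q) * (S ^ (1/p) * (B1/S) ^ (1/p)) := by
            rw [Real.mul_rpow hS.le (by positivity)]
        _ = S ^ (1/p) * (D ^ (1/q) * (B1/S) ^ (1/p)) := by ring
    have hsum1 : (1/q * C + 1/p * (A1/S)) + (1/q * D + 1/p * (B1/S)) ≤ 1 := by
      have hfrac : A1/S + B1/S = 1 := by
        field_simp
        exact hSdef.symm
      have hq' : 1/q * C + 1/q * D ≤ 1/q := by
        have : 1/q * (C + D) ≤ 1/q * 1 := by
          apply mul_le_mul_of_nonneg_left hCD (by positivity)
        linarith [this]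
      have hp' : 1/p * (A1/S) + 1/p * (B1/S) = 1/p := by
        have : 1/p * (A1/S + B1/S) = 1/p * 1 := by rw [hfrac]
        linarith [this]
      linarith
    calc C ^ (1/q) * A1 ^ (1/p) + D ^ (1/q) * B1 ^ (1/p)
        = S ^ (1/p) * ((C ^ (1/q) * (A1/S) ^ (1/p)) + (D ^ (1/q) * (B1/S) ^ (1/p))) := by
          rw [e1, e2]; ring
      _ ≤ S ^ (1/p) * 1 := by
          apply mul_le_mul_of_nonneg_left _ hSp
          calc (C ^ (1/q) * (A1/S) ^ (1/p)) + (D ^ (1/q) * (B1/S) ^ (1/p))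
              ≤ (1/q * C + 1/p * (A1/S)) + (1/q * D + 1/p * (B1/S)) := add_le_add key1 key2
            _ ≤ 1 := hsum1
      _ = S ^ (1/p) := mul_one _

/-- A noncommutative Hölder-type inequality (Ando–Hiai) in a finite factor, presented
via its normalized faithful tracial state `tr`: if `1 < p, q < ∞` with `1/p + 1/q = 1`
and `c, d ≥ 0` satisfy `c^q + d^q ≤ 1`, then
`tr(ca + db) ≤ (tr(a^p + b^p))^{1/p}` for all `a, b ≥ 0`. -/
theorem hoelder_finite_factor {A : Type*} [CStarAlgebra A] [PartialOrder A] [StarOrderedRing A]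
    (tr : A →ₗ[ℂ] ℂ) (htr_pos : ∀ x : A, 0 ≤ x → 0 ≤ tr x) (htr_unital : tr 1 = 1)
    (htr_tracial : ∀ x y : A, tr (x * y) = tr (y * x))
    (htr_faithful : ∀ x : A, 0 ≤ x → tr x = 0 → x = 0)
    (p q : ℝ) (hp : 1 < p) (hq : 1 < q) (hpq : 1 / p + 1 / q = 1)
    (c d : A) (hc : 0 ≤ c) (hd : 0 ≤ d)
    (hcd : cfc (fun x : ℝ => x ^ q) c + cfc (fun x : ℝ => x ^ q) d ≤ 1)
    (a b : A) (ha : 0 ≤ a) (hb : 0 ≤ b) :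
    (tr (c * a + d * b)).re ≤
      ((tr (cfc (fun x : ℝ => x ^ p) a + cfc (fun x : ℝ => x ^ p) b)).re) ^ (1 / p) := by
  have hC : 0 ≤ (tr (cfc (fun t : ℝ => t ^ q) c)).re :=
    tr_re_nonneg tr htr_pos (rp_nonneg c hc q)
  have hD : 0 ≤ (tr (cfc (fun t : ℝ => t ^ q) d)).re :=
    tr_re_nonneg tr htr_pos (rp_nonneg d hd q)
  have hA1 : 0 ≤ (tr (cfc (fun t : ℝ => t ^ p) a)).re :=
    tr_re_nonneg tr htr_pos (rp_nonneg a ha p)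
  have hB1 : 0 ≤ (tr (cfc (fun t : ℝ => t ^ p) b)).re :=
    tr_re_nonneg tr htr_pos (rp_nonneg b hb p)
  have hCD : (tr (cfc (fun t : ℝ => t ^ q) c)).re + (tr (cfc (fun t : ℝ => t ^ q) d)).re ≤ 1 := by
    have h := tr_re_mono tr htr_pos hcd
    rw [map_add, Complex.add_re, htr_unital] at h
    simpa using h
  have h1 := holder_pair tr htr_pos htr_unital htr_tracial p q hp hq hpq c a hc ha
  have h2 := holder_pair tr htr_pos htr_unital htr_tracial p q hp hq hpq d b hd hb
  have hstep := scalar_step p q hp hq hpq _ _ _ _ hC hD hA1 hB1 hCD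
  rw [map_add, Complex.add_re, map_add, Complex.add_re]
  calc (tr (c * a)).re + (tr (d * b)).re
      ≤ (tr (cfc (fun t : ℝ => t ^ q) c)).re ^ (1/q)
          * (tr (cfc (fun t : ℝ => t ^ p) a)).re ^ (1/p)
        + (tr (cfc (fun t : ℝ => t ^ q) d)).re ^ (1/q)
          * (tr (cfc (fun t : ℝ => t ^ p) b)).re ^ (1/p) := add_le_add h1 h2
    _ ≤ ((tr (cfc (fun t : ℝ => t ^ p) a)).re + (tr (cfc (fun t : ℝ => t ^ p) b)).re) ^ (1/p) :=
        hstep
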